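/- Let T and W be real random variables and Δ a random variable with |Δ| ≥ |T − W| almost surely. Then for all real z: −P(z − |Δ| ≤ W ≤ z) ≤ P(T ≤ z) − P(W ≤ z) ≤ P(z ≤ W ≤ z + |Δ|). -/
import Mathlib


open MeasureTheory

/-- If `|Δ| ≥ |T − W|` a.s., then
`−P(z − |Δ| ≤ W ≤ z) ≤ P(T ≤ z) − P(W ≤ z) ≤ P(z ≤ W ≤ z + |Δ|)`. -/
theorem stmt2 {Ω : Type*} [MeasurableSpace Ω] (μ : Measure Ω) [IsProbabilityMeasure μ]
    (T W Δ : Ω → ℝ) (hT : Measurable T) (hW : Measurable W) (hΔ : Measurable Δ)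
    (h : ∀ᵐ ω ∂μ, |T ω - W ω| ≤ |Δ ω|) (z : ℝ) :
    -(μ {ω | z - |Δ ω| ≤ W ω ∧ W ω ≤ z}).toReal
      ≤ (μ {ω | T ω ≤ z}).toReal - (μ {ω | W ω ≤ z}).toReal
    ∧ (μ {ω | T ω ≤ z}).toReal - (μ {ω | W ω ≤ z}).toReal
      ≤ (μ {ω | z ≤ W ω ∧ W ω ≤ z + |Δ ω|}).toReal := by
  set A := {ω | T ω ≤ z}
  set B := {ω | W ω ≤ z}
  set C := {ω | z - |Δ ω| ≤ W ω ∧ W ω ≤ z}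
  set D := {ω | z ≤ W ω ∧ W ω ≤ z + |Δ ω|}
  have h1 : μ A ≤ μ B + μ D := by
    calc μ A ≤ μ (B ∪ D) := by
          apply measure_mono_ae
          filter_upwards [h] with ω hω hA
          by_cases hB : W ω ≤ z
          · exact Or.inl hB
          · refine Or.inr ⟨le_of_not_ge hB, ?_⟩
            have : W ω - T ω ≤ |Δ ω| := by
              have := abs_sub_comm (T ω) (W ω) ▸ hω
              linarith [le_abs_self (W ω - T ω), hω, abs_sub_comm (T ω) (W ω)]
            have hA' : T ω ≤ z := hA
            linarith
      _ ≤ μ B + μ D := measure_union_le _ _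
  have h2 : μ B ≤ μ A + μ C := by
    calc μ B ≤ μ (A ∪ C) := by
          apply measure_mono_ae
          filter_upwards [h] with ω hω hB
          by_cases hA : T ω ≤ z
          · exact Or.inl hA
          · have hB' : W ω ≤ z := hB
            refine Or.inr ⟨?_, hB'⟩
            have : T ω - W ω ≤ |Δ ω| := le_trans (le_abs_self _) hω
            linarith [le_of_not_ge hA]
      _ ≤ μ A + μ C := measure_union_le _ _
  have fA := measure_ne_top μ A
  have fB := measure_ne_top μ B
  have fC := measure_ne_top μ C
  have fD := measure_ne_top μ D
  have r1 : (μ A).toReal ≤ (μ B).toReal + (μ D).toReal := by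
    rw [← ENNReal.toReal_add fB fD]
    exact ENNReal.toReal_mono (by simp [fB, fD]) h1
  have r2 : (μ B).toReal ≤ (μ A).toReal + (μ C).toReal := by
    rw [← ENNReal.toReal_add fA fC]
    exact ENNReal.toReal_mono (by simp [fA, fC]) h2
  constructor <;> linarith
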